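/- Every saturated numerical semigroup is an Arf numerical semigroup. -/

import Mathlib

def IsNumericalSemigroup (S : Set ℕ) : Prop :=
  0 ∈ S ∧ (∀ a ∈ S, ∀ b ∈ S, a + b ∈ S) ∧ Sᶜ.Finite

def HasFrobenius (S : Set ℕ) (F : ℕ) : Prop :=
  F ∉ S ∧ ∀ n, F < n → n ∈ S

def IsIsolatedGap (S : Set ℕ) (h : ℕ) : Prop :=
  h ∉ S ∧ h - 1 ∈ S ∧ h + 1 ∈ S

def IsPerfect (S : Set ℕ) : Prop := ∀ h, ¬ IsIsolatedGap S h

def Delta (F : ℕ) : Set ℕ := {0} ∪ {n | F + 1 ≤ n}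

def IsSpecialGap (S : Set ℕ) (x : ℕ) : Prop :=
  x ∉ S ∧ 2 * x ∈ S ∧ ∀ s ∈ S, s ≠ 0 → x + s ∈ S

def IsMinimalGenerator (S : Set ℕ) (x : ℕ) : Prop :=
  x ∈ S ∧ x ≠ 0 ∧ ∀ a ∈ S, ∀ b ∈ S, a ≠ 0 → b ≠ 0 → x ≠ a + b

open Classical in
noncomputable def dgcd (S : Set ℕ) (s : ℕ) : ℕ :=
  ((Finset.range (s + 1)).filter (fun x => x ∈ S ∧ 0 < x)).gcd id

lemma dgcd_dvd {S : Set ℕ} {s x : ℕ} (hx : x ∈ S) (h0 : 0 < x) (hxs : x ≤ s) :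
    dgcd S s ∣ x := by
  classical
  have : x ∈ ((Finset.range (s + 1)).filter (fun x => x ∈ S ∧ 0 < x)) := by
    simp [Finset.mem_filter, Nat.lt_succ_iff, hxs, hx, h0]
  exact Finset.gcd_dvd (f := id) this

lemma dvd_dgcd {S : Set ℕ} {s c : ℕ} (h : ∀ x ∈ S, 0 < x → x ≤ s → c ∣ x) :
    c ∣ dgcd S s := by
  classical
  apply Finset.dvd_gcd
  intro x hx
  simp only [Finset.mem_filter, Finset.mem_range, Nat.lt_succ_iff] at hx
  exact h x hx.2.1 hx.2.2 hx.1

theorem stmt_16 (S : Set ℕ) (hS : IsNumericalSemigroup S)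
    (hsat : ∀ s ∈ S, s ≠ 0 → ∀ d : ℕ,
      ((∀ x ∈ S, 0 < x → x ≤ s → d ∣ x) ∧
        (∀ c : ℕ, (∀ x ∈ S, 0 < x → x ≤ s → c ∣ x) → c ∣ d)) →
      s + d ∈ S) :
    ∀ x ∈ S, ∀ y ∈ S, ∀ z ∈ S, z ≤ y → y ≤ x → x + y - z ∈ S := by
  obtain ⟨h0, hadd, hfin⟩ := hS
  -- saturation in terms of dgcd
  have sat' : ∀ s ∈ S, s ≠ 0 → s + dgcd S s ∈ S := by
    intro s hs hs0
    exact hsat s hs hs0 (dgcd S s)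
      ⟨fun x hx hx0 hxs => dgcd_dvd hx hx0 hxs, fun c hc => dvd_dgcd hc⟩
  -- Lemma A : for a ≤ s in S with a > 0, s + dgcd S a ∈ S
  have lemA : ∀ a ∈ S, 0 < a → ∀ s ∈ S, a ≤ s → s + dgcd S a ∈ S := by
    intro a haS ha0 s hsS has
    set D := dgcd S a with hD
    have hs0 : 0 < s := lt_of_lt_of_le ha0 has
    have key : ∀ k, ∀ t ∈ S, s ≤ t → t - s ≤ D → D - (t - s) = k → s + D ∈ S := by
      intro k
      induction k using Nat.strong_induction_on with
      | _ k ih =>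
        intro t htS hst htsD hk
        rcases eq_or_lt_of_le htsD with heq | hlt
        · have : t = s + D := by omega
          rwa [this] at htS
        · -- t - s < D
          have ht0 : 0 < t := lt_of_lt_of_le hs0 hst
          set dt := dgcd S t with hdt
          have hdtD : dt ∣ D := dvd_dgcd (fun x hx hx0 hxa =>
            dgcd_dvd hx hx0 (hxa.trans (has.trans hst)))
          have hdts : dt ∣ s := dgcd_dvd hsS hs0 hst
          have hdtt : dt ∣ t := dgcd_dvd htS ht0 le_rfl
          have hdtpos : 0 < dt := Nat.pos_of_dvd_of_pos hdtt ht0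
          have hdtts : dt ∣ t - s := Nat.dvd_sub hdtt hdts
          have hdtdiff : dt ∣ D - (t - s) := Nat.dvd_sub hdtD hdtts
          have hle : dt ≤ D - (t - s) := Nat.le_of_dvd (by omega) hdtdiff
          have ht' : t + dt ∈ S := sat' t htS (by omega)
          exact ih (D - (t + dt - s)) (by omega) (t + dt) ht' (by omega) (by omega) rfl
    exact key (D - (s - s)) s hsS le_rfl (by omega) rfl
  -- main proof
  intro x hx y hy z hz hzy hyx
  rcases Nat.eq_zero_or_pos z with hz0 | hz0
  · subst hz0
    simpa using hadd x hx y hy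
  · have hy0 : 0 < y := lt_of_lt_of_le hz0 hzy
    set d := dgcd S y with hd
    have iter : ∀ k, x + k * d ∈ S := by
      intro k
      induction k with
      | zero => simpa using hx
      | succ n ihn =>
        have := lemA y hy hy0 (x + n * d) ihn (le_trans hyx (Nat.le_add_right _ _))
        have heq : x + (n + 1) * d = x + n * d + d := by ring
        rwa [heq]
    have hdyz : d ∣ y - z := Nat.dvd_sub (dgcd_dvd hy hy0 le_rfl) (dgcd_dvd hz hz0 hzy)
    obtain ⟨m, hm⟩ := hdyz
    have hxyz : x + y - z = x + (y - z) := by omega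
    rw [hxyz, hm, mul_comm]
    exact iter m
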